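/- Let C ⊆ (Z/kZ)^{2n} be an additive code. The Construction A lattice Λ(C) is even and self-dual with respect to the off-diagonal Lorentzian form η if and only if C is even and self-dual with respect to η. -/

import Mathlib

open scoped BigOperators

/-- Real off-diagonal Lorentzian form `η(x,y) = Σ (x_i y_{n+i} + y_i x_{n+i})`. -/
noncomputable def etaR {n : ℕ} (x y : (Fin n → ℝ) × (Fin n → ℝ)) : ℝ :=
  ∑ i, (x.1 i * y.2 i + y.1 i * x.2 i)

/-- Construction A lattice of a code `C ⊆ (Z/kZ)^{2n}`, scaled by `1/√k`. -/
noncomputable def constructionA {n : ℕ} (k : ℕ)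
    (C : Set ((Fin n → ZMod k) × (Fin n → ZMod k))) :
    Set ((Fin n → ℝ) × (Fin n → ℝ)) :=
  { x | ∃ u ∈ C, ∃ m₁ m₂ : Fin n → ℤ,
      (∀ i, x.1 i = (((u.1 i).val : ℝ) + k * m₁ i) / Real.sqrt k) ∧
      (∀ i, x.2 i = (((u.2 i).val : ℝ) + k * m₂ i) / Real.sqrt k) }

/-- Dual lattice with respect to `etaR`. -/
noncomputable def dualLattice {n : ℕ} (Λ : Set ((Fin n → ℝ) × (Fin n → ℝ))) :
    Set ((Fin n → ℝ) × (Fin n → ℝ)) :=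
  { y | ∀ x ∈ Λ, ∃ z : ℤ, etaR x y = z }

/-- Lorentzian form in `Z/kZ`. -/
def etaMod {n k : ℕ} (u v : (Fin n → ZMod k) × (Fin n → ZMod k)) : ZMod k :=
  ∑ i, (u.1 i * v.2 i + v.1 i * u.2 i)

/-- Dual code with respect to the Lorentzian form mod `k`. -/
def dualCode {n k : ℕ} (C : Set ((Fin n → ZMod k) × (Fin n → ZMod k))) :
    Set ((Fin n → ZMod k) × (Fin n → ZMod k)) :=
  { v | ∀ u ∈ C, etaMod u v = 0 }

/-- Integer-lift Lorentzian norm of a codeword. -/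
def etaInt {n k : ℕ} (u v : (Fin n → ZMod k) × (Fin n → ZMod k)) : ℤ :=
  ∑ i, (((u.1 i).val : ℤ) * ((v.2 i).val : ℤ) + ((v.1 i).val : ℤ) * ((u.2 i).val : ℤ))

/-! ### Auxiliary machinery -/

/-- Integer Lorentzian form. -/
def etaZ {n : ℕ} (a b : (Fin n → ℤ) × (Fin n → ℤ)) : ℤ :=
  ∑ i, (a.1 i * b.2 i + b.1 i * a.2 i)

/-- Integer lift of a codeword component. -/
def liftF {n : ℕ} (k : ℕ) (c : Fin n → ZMod k) (m : Fin n → ℤ) : Fin n → ℤ :=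
  fun i => (c i).val + k * m i

lemma lift_eq {n : ℕ} (k : ℕ) (c : Fin n → ZMod k) (m : Fin n → ℤ) (i : Fin n) :
    (((c i).val : ℝ) + k * m i) = ((liftF k c m i : ℤ) : ℝ) := by
  push_cast [liftF]; ring

/-- The real point obtained by lifting a codeword. -/
noncomputable def liftPt {n : ℕ} (k : ℕ) (u : (Fin n → ZMod k) × (Fin n → ZMod k))
    (m₁ m₂ : Fin n → ℤ) : (Fin n → ℝ) × (Fin n → ℝ) :=
  (fun i => ((liftF k u.1 m₁ i : ℤ) : ℝ) / Real.sqrt k,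
   fun i => ((liftF k u.2 m₂ i : ℤ) : ℝ) / Real.sqrt k)

lemma liftPt_mem {n k : ℕ} {S : Set ((Fin n → ZMod k) × (Fin n → ZMod k))}
    {u : (Fin n → ZMod k) × (Fin n → ZMod k)} (hu : u ∈ S) (m₁ m₂ : Fin n → ℤ) :
    liftPt k u m₁ m₂ ∈ constructionA k S := by
  exact ⟨u, hu, m₁, m₂, fun i => by rw [lift_eq]; rfl, fun i => by rw [lift_eq]; rfl⟩

lemma etaR_eq_etaZ {n k : ℕ} (hk : 0 < k) {x y : (Fin n → ℝ) × (Fin n → ℝ)}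
    {a b : (Fin n → ℤ) × (Fin n → ℤ)}
    (hx1 : ∀ i, x.1 i = (a.1 i : ℝ) / Real.sqrt k) (hx2 : ∀ i, x.2 i = (a.2 i : ℝ) / Real.sqrt k)
    (hy1 : ∀ i, y.1 i = (b.1 i : ℝ) / Real.sqrt k) (hy2 : ∀ i, y.2 i = (b.2 i : ℝ) / Real.sqrt k) :
    etaR x y = (etaZ a b : ℝ) / k := by
  have hs : Real.sqrt k * Real.sqrt k = (k : ℝ) := Real.mul_self_sqrt (by positivity)
  rw [etaR, etaZ]
  push_cast
  rw [Finset.sum_div]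
  refine Finset.sum_congr rfl fun i _ => ?_
  rw [hx1, hx2, hy1, hy2, div_mul_div_comm, div_mul_div_comm, hs, ← add_div]

lemma dvd_lift {n k : ℕ} (u v : (Fin n → ZMod k) × (Fin n → ZMod k))
    (m₁ m₂ l₁ l₂ : Fin n → ℤ) :
    (k : ℤ) ∣ etaZ (liftF k u.1 m₁, liftF k u.2 m₂) (liftF k v.1 l₁, liftF k v.2 l₂)
      - etaInt u v := by
  rw [etaZ, etaInt, ← Finset.sum_sub_distrib]
  refine Finset.dvd_sum fun i _ => ?_
  exact ⟨(u.1 i).val * l₂ i + m₁ i * (v.2 i).val + k * (m₁ i * l₂ i)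
    + ((v.1 i).val * m₂ i + l₁ i * (u.2 i).val + k * (l₁ i * m₂ i)), by simp [liftF]; ring⟩

lemma dvd_lift_diag {n k : ℕ} (u : (Fin n → ZMod k) × (Fin n → ZMod k))
    (m₁ m₂ : Fin n → ℤ) :
    (2 * (k : ℤ)) ∣ etaZ (liftF k u.1 m₁, liftF k u.2 m₂) (liftF k u.1 m₁, liftF k u.2 m₂)
      - etaInt u u := by
  rw [etaZ, etaInt, ← Finset.sum_sub_distrib]
  refine Finset.dvd_sum fun i _ => ?_
  exact ⟨(u.1 i).val * m₂ i + m₁ i * (u.2 i).val + k * (m₁ i * m₂ i), by simp [liftF]; ring⟩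

lemma dvd_lift_left {n k : ℕ} (u : (Fin n → ZMod k) × (Fin n → ZMod k))
    (m₁ m₂ : Fin n → ℤ) (b : (Fin n → ℤ) × (Fin n → ℤ)) :
    (k : ℤ) ∣ etaZ (liftF k u.1 m₁, liftF k u.2 m₂) b
      - etaZ (fun i => ((u.1 i).val : ℤ), fun i => ((u.2 i).val : ℤ)) b := by
  rw [etaZ, etaZ, ← Finset.sum_sub_distrib]
  refine Finset.dvd_sum fun i _ => ?_
  exact ⟨m₁ i * b.2 i + b.1 i * m₂ i, by simp [liftF]; ring⟩

lemma etaMod_eq_cast {n k : ℕ} [NeZero k] (u v : (Fin n → ZMod k) × (Fin n → ZMod k)) :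
    etaMod u v = ((etaInt u v : ℤ) : ZMod k) := by
  rw [etaMod, etaInt]
  push_cast
  simp [ZMod.natCast_val, ZMod.cast_id]

lemma etaMod_cast_eq {n k : ℕ} [NeZero k] (u : (Fin n → ZMod k) × (Fin n → ZMod k))
    (b : (Fin n → ℤ) × (Fin n → ℤ)) :
    etaMod u (fun i => ((b.1 i : ZMod k)), fun i => (b.2 i : ZMod k))
      = ((etaZ (fun i => ((u.1 i).val : ℤ), fun i => ((u.2 i).val : ℤ)) b : ℤ) : ZMod k) := by
  rw [etaMod, etaZ]
  push_cast
  simp [ZMod.natCast_val, ZMod.cast_id]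

lemma exists_int_of_div {k : ℕ} (hk : 0 < k) {r : ℝ} {A : ℤ} (h : r = (A : ℝ) / k) :
    (∃ z : ℤ, r = z) ↔ (k : ℤ) ∣ A := by
  have hk0 : (k : ℝ) ≠ 0 := by positivity
  constructor
  · rintro ⟨z, hz⟩
    refine ⟨z, ?_⟩
    rw [h, div_eq_iff hk0] at hz
    exact_mod_cast hz.trans (mul_comm _ _)
  · rintro ⟨t, ht⟩
    refine ⟨t, ?_⟩
    rw [h, ht]
    push_cast
    field_simp

lemma exists_int_of_div_even {k : ℕ} (hk : 0 < k) {r : ℝ} {A : ℤ} (h : r = (A : ℝ) / k) :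
    (∃ z : ℤ, r = 2 * z) ↔ (2 * (k : ℤ)) ∣ A := by
  have hk0 : (k : ℝ) ≠ 0 := by positivity
  constructor
  · rintro ⟨z, hz⟩
    refine ⟨z, ?_⟩
    rw [h, div_eq_iff hk0] at hz
    have : (A : ℝ) = 2 * k * z := by rw [hz]; ring
    exact_mod_cast this
  · rintro ⟨t, ht⟩
    refine ⟨t, ?_⟩
    rw [h, ht]
    push_cast
    field_simp

theorem constructionA_even_self_dual_iff (n k : ℕ) (hk : 0 < k)
    (C : AddSubgroup ((Fin n → ZMod k) × (Fin n → ZMod k))) :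
    ((∀ lam ∈ constructionA (n := n) k (C : Set _), ∃ z : ℤ, etaR lam lam = 2 * z) ∧
      constructionA (n := n) k (C : Set _) = dualLattice (constructionA (n := n) k (C : Set _))) ↔
      ((∀ u ∈ C, (2 * (k : ℤ)) ∣ etaInt u u) ∧
        (C : Set _) = dualCode (n := n) (k := k) (C : Set _)) := by
  haveI : NeZero k := ⟨hk.ne'⟩
  have hs : Real.sqrt k * Real.sqrt k = (k : ℝ) := Real.mul_self_sqrt (by positivity)
  have hs0 : Real.sqrt k ≠ 0 := by
    have : (0:ℝ) < Real.sqrt k := Real.sqrt_pos.mpr (by exact_mod_cast hk)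
    exact this.ne'
  -- convert constructionA membership data into liftF form
  have hconv : ∀ x ∈ constructionA (n := n) k (C : Set _),
      ∃ u ∈ C, ∃ m₁ m₂ : Fin n → ℤ,
        (∀ i, x.1 i = ((liftF k u.1 m₁ i : ℤ) : ℝ) / Real.sqrt k) ∧
        (∀ i, x.2 i = ((liftF k u.2 m₂ i : ℤ) : ℝ) / Real.sqrt k) := by
    rintro x ⟨u, hu, m₁, m₂, hx1, hx2⟩
    exact ⟨u, hu, m₁, m₂, fun i => by rw [hx1 i, lift_eq], fun i => by rw [hx2 i, lift_eq]⟩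
  constructor
  · rintro ⟨heven, hdual⟩
    constructor
    · -- lattice even → code even
      intro u hu
      have hm : liftPt k u (0 : Fin n → ℤ) 0 ∈ constructionA (n := n) k (C : Set _) :=
        liftPt_mem hu 0 0
      obtain ⟨z, hz⟩ := heven _ hm
      have hval : etaR (liftPt k u 0 0) (liftPt k u 0 0)
          = ((etaZ (liftF k u.1 0, liftF k u.2 0) (liftF k u.1 0, liftF k u.2 0) : ℤ) : ℝ) / k :=
        etaR_eq_etaZ hk (fun i => rfl) (fun i => rfl) (fun i => rfl) (fun i => rfl)
      have hA : (2 * (k : ℤ)) ∣ etaZ (liftF k u.1 0, liftF k u.2 0) (liftF k u.1 0, liftF k u.2 0) :=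
        (exists_int_of_div_even hk hval).mp ⟨z, hz⟩
      have hd := dvd_lift_diag u (0 : Fin n → ℤ) 0
      have := dvd_sub hA hd
      simpa using this
    · -- lattice self-dual → code self-dual
      apply Set.Subset.antisymm
      · -- C ⊆ dualCode C
        intro v hv u hu
        have hyD : liftPt k v 0 0 ∈ dualLattice (constructionA (n := n) k (C : Set _)) := by
          rw [← hdual]; exact liftPt_mem hv 0 0
        obtain ⟨z, hz⟩ := hyD _ (liftPt_mem hu 0 0)
        have hval : etaR (liftPt k u 0 0) (liftPt k v 0 0)
            = ((etaZ (liftF k u.1 0, liftF k u.2 0) (liftF k v.1 0, liftF k v.2 0) : ℤ) : ℝ) / k :=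
          etaR_eq_etaZ hk (fun i => rfl) (fun i => rfl) (fun i => rfl) (fun i => rfl)
        have hA : (k : ℤ) ∣ etaZ (liftF k u.1 0, liftF k u.2 0) (liftF k v.1 0, liftF k v.2 0) :=
          (exists_int_of_div hk hval).mp ⟨z, hz⟩
        have hd := dvd_lift u v (0 : Fin n → ℤ) 0 0 0
        have : (k : ℤ) ∣ etaInt u v := by
          have := dvd_sub hA hd
          simpa using this
        rw [etaMod_eq_cast]
        exact (ZMod.intCast_zmod_eq_zero_iff_dvd _ _).mpr this
      · -- dualCode C ⊆ C
        intro v hv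
        have hyD : liftPt k v 0 0 ∈ dualLattice (constructionA (n := n) k (C : Set _)) := by
          intro x hx
          obtain ⟨u, hu, m₁, m₂, hx1, hx2⟩ := hconv x hx
          have hval : etaR x (liftPt k v 0 0)
              = ((etaZ (liftF k u.1 m₁, liftF k u.2 m₂) (liftF k v.1 0, liftF k v.2 0) : ℤ) : ℝ) / k :=
            etaR_eq_etaZ hk hx1 hx2 (fun i => rfl) (fun i => rfl)
          have hI : (k : ℤ) ∣ etaInt u v := by
            have h0 : etaMod u v = 0 := hv u hu
            rw [etaMod_eq_cast] at h0
            exact (ZMod.intCast_zmod_eq_zero_iff_dvd _ _).mp h0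
          have hd := dvd_lift u v m₁ m₂ (0 : Fin n → ℤ) 0
          refine (exists_int_of_div hk hval).mpr ?_
          have := dvd_add hd hI
          simpa using this
        rw [← hdual] at hyD
        obtain ⟨w, hw, l₁, l₂, hy1, hy2⟩ := hyD
        have heq1 : v.1 = w.1 := by
          funext i
          have h := hy1 i
          have h' : ((liftF k v.1 0 i : ℤ) : ℝ) = ((w.1 i).val : ℝ) + k * l₁ i := by
            have h0 : ((liftF k v.1 0 i : ℤ) : ℝ) / Real.sqrt k
                = (((w.1 i).val : ℝ) + k * l₁ i) / Real.sqrt k := by rw [← h]; rfl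
            rw [div_eq_div_iff hs0 hs0] at h0
            exact mul_right_cancel₀ hs0 h0
          have hint : ((v.1 i).val : ℤ) = ((w.1 i).val : ℤ) + k * l₁ i := by
            have h'' := h'
            push_cast [liftF] at h''
            exact_mod_cast h''
          have h2 : (((v.1 i).val : ℤ) : ZMod k) = (((w.1 i).val : ℤ) : ZMod k) := by
            rw [hint]; push_cast; simp
          simpa [ZMod.natCast_val, ZMod.cast_id] using h2
        have heq2 : v.2 = w.2 := by
          funext i
          have h := hy2 i
          have h' : ((liftF k v.2 0 i : ℤ) : ℝ) = ((w.2 i).val : ℝ) + k * l₂ i := by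
            have h0 : ((liftF k v.2 0 i : ℤ) : ℝ) / Real.sqrt k
                = (((w.2 i).val : ℝ) + k * l₂ i) / Real.sqrt k := by rw [← h]; rfl
            rw [div_eq_div_iff hs0 hs0] at h0
            exact mul_right_cancel₀ hs0 h0
          have hint : ((v.2 i).val : ℤ) = ((w.2 i).val : ℤ) + k * l₂ i := by
            have h'' := h'
            push_cast [liftF] at h''
            exact_mod_cast h''
          have h2 : (((v.2 i).val : ℤ) : ZMod k) = (((w.2 i).val : ℤ) : ZMod k) := by
            rw [hint]; push_cast; simp
          simpa [ZMod.natCast_val, ZMod.cast_id] using h2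
        have : v = w := Prod.ext heq1 heq2
        rw [this]
        exact hw
  · rintro ⟨heven, hdual⟩
    have hsubdual : constructionA (n := n) k (C : Set _)
        ⊆ dualLattice (constructionA (n := n) k (C : Set _)) := by
      intro y hy x hx
      obtain ⟨u, hu, m₁, m₂, hx1, hx2⟩ := hconv x hx
      obtain ⟨v, hv, l₁, l₂, hy1, hy2⟩ := hconv y hy
      have hval : etaR x y
          = ((etaZ (liftF k u.1 m₁, liftF k u.2 m₂) (liftF k v.1 l₁, liftF k v.2 l₂) : ℤ) : ℝ) / k :=
        etaR_eq_etaZ hk hx1 hx2 hy1 hy2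
      have hI : (k : ℤ) ∣ etaInt u v := by
        have hvd : v ∈ dualCode (n := n) (k := k) (C : Set _) := hdual ▸ hv
        have h0 : etaMod u v = 0 := hvd u hu
        rw [etaMod_eq_cast] at h0
        exact (ZMod.intCast_zmod_eq_zero_iff_dvd _ _).mp h0
      refine (exists_int_of_div hk hval).mpr ?_
      have := dvd_add (dvd_lift u v m₁ m₂ l₁ l₂) hI
      simpa using this
    constructor
    · -- code even → lattice even
      intro x hx
      obtain ⟨u, hu, m₁, m₂, hx1, hx2⟩ := hconv x hx
      have hval : etaR x x
          = ((etaZ (liftF k u.1 m₁, liftF k u.2 m₂) (liftF k u.1 m₁, liftF k u.2 m₂) : ℤ) : ℝ) / k :=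
        etaR_eq_etaZ hk hx1 hx2 hx1 hx2
      refine (exists_int_of_div_even hk hval).mpr ?_
      have := dvd_add (dvd_lift_diag u m₁ m₂) (heven u hu)
      simpa using this
    · -- self-duality of the lattice
      apply Set.Subset.antisymm hsubdual
      intro y hy
      -- extract integrality of √k • y from pairing with the basis vectors
      have h2 : ∀ i : Fin n, ∃ z : ℤ, y.2 i = (z : ℝ) / Real.sqrt k := by
        intro i
        set x := liftPt k (0 : (Fin n → ZMod k) × (Fin n → ZMod k))
          (fun j => if j = i then 1 else 0) 0 with hxdef
        have hxmem : x ∈ constructionA (n := n) k (C : Set _) := by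
          rw [hxdef]; exact liftPt_mem C.zero_mem _ _
        obtain ⟨z, hz⟩ := hy x hxmem
        have hx1v : ∀ j, x.1 j = if j = i then Real.sqrt k else 0 := by
          intro j
          show ((liftF k (0 : (Fin n → ZMod k) × (Fin n → ZMod k)).1
            (fun j => if j = i then 1 else 0) j : ℤ) : ℝ) / Real.sqrt k = _
          simp only [liftF, Prod.fst_zero, Pi.zero_apply, ZMod.val_zero, Nat.cast_zero, zero_add]
          split
          · push_cast
            rw [mul_one]
            exact (div_eq_iff hs0).mpr hs.symm
          · push_cast
            simp
        have hx2v : ∀ j, x.2 j = 0 := by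
          intro j
          show ((liftF k (0 : (Fin n → ZMod k) × (Fin n → ZMod k)).2 0 j : ℤ) : ℝ) / Real.sqrt k = _
          simp [liftF]
        have hcalc : etaR x y = Real.sqrt k * y.2 i := by
          rw [etaR]
          calc ∑ j, (x.1 j * y.2 j + y.1 j * x.2 j)
              = ∑ j, (if j = i then Real.sqrt k * y.2 j else 0) := by
                refine Finset.sum_congr rfl fun j _ => ?_
                rw [hx1v j, hx2v j]
                split <;> simp
            _ = Real.sqrt k * y.2 i := by simp
        refine ⟨z, ?_⟩
        rw [eq_div_iff hs0, mul_comm, ← hcalc, hz]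
      have h1 : ∀ i : Fin n, ∃ z : ℤ, y.1 i = (z : ℝ) / Real.sqrt k := by
        intro i
        set x := liftPt k (0 : (Fin n → ZMod k) × (Fin n → ZMod k)) 0
          (fun j => if j = i then 1 else 0) with hxdef
        have hxmem : x ∈ constructionA (n := n) k (C : Set _) := by
          rw [hxdef]; exact liftPt_mem C.zero_mem _ _
        obtain ⟨z, hz⟩ := hy x hxmem
        have hx2v : ∀ j, x.2 j = if j = i then Real.sqrt k else 0 := by
          intro j
          show ((liftF k (0 : (Fin n → ZMod k) × (Fin n → ZMod k)).2
            (fun j => if j = i then 1 else 0) j : ℤ) : ℝ) / Real.sqrt k = _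
          simp only [liftF, Prod.snd_zero, Pi.zero_apply, ZMod.val_zero, Nat.cast_zero, zero_add]
          split
          · push_cast
            rw [mul_one]
            exact (div_eq_iff hs0).mpr hs.symm
          · push_cast
            simp
        have hx1v : ∀ j, x.1 j = 0 := by
          intro j
          show ((liftF k (0 : (Fin n → ZMod k) × (Fin n → ZMod k)).1 0 j : ℤ) : ℝ) / Real.sqrt k = _
          simp [liftF]
        have hcalc : etaR x y = Real.sqrt k * y.1 i := by
          rw [etaR]
          calc ∑ j, (x.1 j * y.2 j + y.1 j * x.2 j)
              = ∑ j, (if j = i then Real.sqrt k * y.1 j else 0) := by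
                refine Finset.sum_congr rfl fun j _ => ?_
                rw [hx1v j, hx2v j]
                split <;> simp [mul_comm]
            _ = Real.sqrt k * y.1 i := by simp
        refine ⟨z, ?_⟩
        rw [eq_div_iff hs0, mul_comm, ← hcalc, hz]
      choose b1 hb1 using h1
      choose b2 hb2 using h2
      -- the reduction of (b1, b2) mod k
      set v : (Fin n → ZMod k) × (Fin n → ZMod k) :=
        (fun i => ((b1 i : ZMod k)), fun i => (b2 i : ZMod k)) with hvdef
      have hvdual : v ∈ dualCode (n := n) (k := k) (C : Set _) := by
        intro u hu
        obtain ⟨z, hz⟩ := hy _ (liftPt_mem (k := k) (S := (C : Set _)) hu (0 : Fin n → ℤ) 0)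
        have hval : etaR (liftPt k u 0 0) y
            = ((etaZ (liftF k u.1 0, liftF k u.2 0) (b1, b2) : ℤ) : ℝ) / k :=
          etaR_eq_etaZ hk (fun i => rfl) (fun i => rfl) hb1 hb2
        have hA : (k : ℤ) ∣ etaZ (liftF k u.1 0, liftF k u.2 0) (b1, b2) :=
          (exists_int_of_div hk hval).mp ⟨z, hz⟩
        have hd := dvd_lift_left u (0 : Fin n → ℤ) 0 (b1, b2)
        have hvals : (k : ℤ) ∣ etaZ (fun i => ((u.1 i).val : ℤ), fun i => ((u.2 i).val : ℤ)) (b1, b2) := by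
          have := dvd_sub hA hd
          simpa using this
        rw [hvdef]
        rw [etaMod_cast_eq u (b1, b2)]
        exact (ZMod.intCast_zmod_eq_zero_iff_dvd _ _).mpr hvals
      have hvC : v ∈ (C : Set _) := by rw [hdual]; exact hvdual
      refine ⟨v, hvC, fun i => (b1 i - ((v.1 i).val : ℤ)) / k,
        fun i => (b2 i - ((v.2 i).val : ℤ)) / k, fun i => ?_, fun i => ?_⟩
      · have hd : (k : ℤ) ∣ b1 i - ((v.1 i).val : ℤ) := by
          show (k : ℤ) ∣ b1 i - (((b1 i : ZMod k)).val : ℤ)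
          rw [ZMod.val_intCast]
          exact Int.dvd_self_sub_of_emod_eq rfl
        have e : ((v.1 i).val : ℤ) + k * ((b1 i - ((v.1 i).val : ℤ)) / k) = b1 i := by
          rw [Int.mul_ediv_cancel' hd]; ring
        rw [hb1 i]
        congr 1
        exact_mod_cast e.symm
      · have hd : (k : ℤ) ∣ b2 i - ((v.2 i).val : ℤ) := by
          show (k : ℤ) ∣ b2 i - (((b2 i : ZMod k)).val : ℤ)
          rw [ZMod.val_intCast]
          exact Int.dvd_self_sub_of_emod_eq rfl
        have e : ((v.2 i).val : ℤ) + k * ((b2 i - ((v.2 i).val : ℤ)) / k) = b2 i := by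
          rw [Int.mul_ediv_cancel' hd]; ring
        rw [hb2 i]
        congr 1
        exact_mod_cast e.symm
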